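/- Let n ≥ 1 and let G₀ = G_{0ⁿ} be the set associated with the word consisting of n zeros. For any sequence (ℓ_s)_{s∈ℤ} of real numbers, let J' = {(r + ℓ_s, s/pⁿ) : r, s ∈ ℤ} ⊆ ℝ². Then ⋃_{t∈J'} (G₀ + t) = ℝ², and for any two distinct t, t' ∈ J' the intersection (G₀ + t) ∩ (G₀ + t') has two-dimensional Lebesgue measure zero; in particular G₀ is a self-similar tile. -/

import Mathlib

noncomputable section

/-- `b_j = ε` if `j` is odd and `b_j = 0` if `j` is even. -/
def bshift (ε : ℝ) (j : ℤ) : ℝ := if Odd j then ε else 0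

/-- The self-similar set `T_ε` associated with `p = 2m+1` and the shift `ε`. -/
def Tset (p : ℤ) (m : ℕ) (ε : ℝ) : Set (ℝ × ℝ) :=
  { z | ∃ i j : ℕ → ℤ, (∀ k, |i k| ≤ (m : ℤ)) ∧ (∀ k, |j k| ≤ (m : ℤ)) ∧
      z.1 = ∑' k : ℕ, ((p : ℝ) ^ (k + 1))⁻¹ * ((i k : ℝ) + bshift ε (j k)) ∧
      z.2 = ∑' k : ℕ, ((p : ℝ) ^ (k + 1))⁻¹ * (j k : ℝ) }

/-- The map `f_{i,j}(x, y) = ((x + i + b_j)/p, (y + j)/p)`. -/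
def fmap (p : ℤ) (ε : ℝ) (i j : ℤ) (z : ℝ × ℝ) : ℝ × ℝ :=
  ((z.1 + (i : ℝ) + bshift ε j) / (p : ℝ), (z.2 + (j : ℝ)) / (p : ℝ))

/-- For a word `j₁ ⋯ j_n` (a list of integers in `{-m, …, m}`),
`G_{j₁⋯j_n} = ⋃_{i₁,…,i_n ∈ {-m,…,m}} f_{i₁,j₁} ∘ ⋯ ∘ f_{i_n,j_n}(T_ε)`. -/
def Gset (p : ℤ) (m : ℕ) (ε : ℝ) : List ℤ → Set (ℝ × ℝ)
  | [] => Tset p m ε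
  | j :: w => ⋃ i ∈ Finset.Icc (-(m : ℤ)) (m : ℤ), fmap p ε i j '' Gset p m ε w

namespace Stmt9Aux


variable {P : ℝ}

lemma summable_geomP (hP : 1 < P) : Summable (fun k : ℕ => (P ^ (k+1))⁻¹) := by
  have h0 : (0:ℝ) < P := lt_trans one_pos hP
  have : (fun k : ℕ => (P ^ (k+1))⁻¹) = fun k : ℕ => P⁻¹ ^ k * P⁻¹ := by
    funext k; rw [pow_succ, mul_inv, inv_pow]
  rw [this]
  exact (summable_geometric_of_lt_one (by positivity) (inv_lt_one_of_one_lt₀ hP)).mul_right _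

lemma tsum_geomP (hP : 1 < P) : ∑' k : ℕ, (P ^ (k+1))⁻¹ = (P - 1)⁻¹ := by
  have h0 : (0:ℝ) < P := lt_trans one_pos hP
  have h1 : (fun k : ℕ => (P ^ (k+1))⁻¹) = fun k : ℕ => P⁻¹ ^ k * P⁻¹ := by
    funext k; rw [pow_succ, mul_inv, inv_pow]
  rw [h1, tsum_mul_right, tsum_geometric_of_lt_one (by positivity) (inv_lt_one_of_one_lt₀ hP)]
  rw [eq_comm, inv_eq_iff_eq_inv, eq_comm]
  field_simp

lemma summable_ser (hP : 1 < P) (c : ℕ → ℝ) {M : ℝ} (hc : ∀ k, |c k| ≤ M) :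
    Summable (fun k : ℕ => (P ^ (k+1))⁻¹ * c k) := by
  have h0 : (0:ℝ) < P := lt_trans one_pos hP
  apply Summable.of_abs
  apply Summable.of_nonneg_of_le (f := fun k : ℕ => (P ^ (k+1))⁻¹ * M)
    (fun k => abs_nonneg _) _ ((summable_geomP hP).mul_right _)
  intro k
  rw [abs_mul, abs_inv, abs_pow, abs_of_pos h0]
  exact mul_le_mul_of_nonneg_left (hc k) (by positivity)

lemma ser_const (hP : 1 < P) (M : ℝ) :
    ∑' k : ℕ, (P ^ (k+1))⁻¹ * M = M * (P - 1)⁻¹ := by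
  rw [tsum_mul_right, tsum_geomP hP, mul_comm]

lemma abs_ser_le (hP : 1 < P) (c : ℕ → ℝ) {M : ℝ} (hc : ∀ k, |c k| ≤ M) :
    |∑' k : ℕ, (P ^ (k+1))⁻¹ * c k| ≤ M * (P - 1)⁻¹ := by
  have h0 : (0:ℝ) < P := lt_trans one_pos hP
  have habs : Summable (fun k : ℕ => |(P ^ (k+1))⁻¹ * c k|) := (summable_ser hP c hc).abs
  calc |∑' k : ℕ, (P ^ (k+1))⁻¹ * c k| ≤ ∑' k : ℕ, |(P ^ (k+1))⁻¹ * c k| := by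
        have := norm_tsum_le_tsum_norm (f := fun k : ℕ => (P ^ (k+1))⁻¹ * c k)
            (by simpa only [Real.norm_eq_abs] using habs)
        simpa only [Real.norm_eq_abs] using this
      _ ≤ ∑' k : ℕ, (P ^ (k+1))⁻¹ * M := by
        apply Summable.tsum_le_tsum _ habs ((summable_geomP hP).mul_right _)
        intro k
        rw [abs_mul, abs_inv, abs_pow, abs_of_pos h0]
        exact mul_le_mul_of_nonneg_left (hc k) (by positivity)
      _ = M * (P - 1)⁻¹ := ser_const hP M


variable {P : ℝ}

-- tail splitting
lemma ser_tail (hP : 1 < P) (c : ℕ → ℝ) {M : ℝ} (hc : ∀ k, |c k| ≤ M) (N : ℕ) :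
    ∑' k : ℕ, (P ^ (k+1))⁻¹ * c k =
      (∑ k ∈ Finset.range N, (P ^ (k+1))⁻¹ * c k)
        + (P ^ N)⁻¹ * ∑' k : ℕ, (P ^ (k+1))⁻¹ * c (k + N) := by
  have h0 : (0:ℝ) < P := lt_trans one_pos hP
  have hs := summable_ser hP c hc
  rw [← Summable.sum_add_tsum_nat_add N hs]
  congr 1
  rw [← tsum_mul_left]
  apply tsum_congr
  intro k
  have h1 : P ^ (k + N + 1) = P ^ N * P ^ (k+1) := by ring
  rw [h1, mul_inv]
  ring

-- cons lemma
lemma ser_zero_add (hP : 1 < P) (c : ℕ → ℝ) {M : ℝ} (hc : ∀ k, |c k| ≤ M) :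
    ∑' k : ℕ, (P ^ (k+1))⁻¹ * c k
      = P⁻¹ * (c 0 + ∑' k : ℕ, (P ^ (k+1))⁻¹ * c (k+1)) := by
  have h0 : (0:ℝ) < P := lt_trans one_pos hP
  have h := ser_tail hP c hc 1
  simp only [Finset.range_one, Finset.sum_singleton, pow_one] at h
  rw [h]; ring

-- extremal lemma
lemma ser_extremal (hP : 1 < P) (c : ℕ → ℝ) {M : ℝ} (hc : ∀ k, |c k| ≤ M)
    (h : ∑' k : ℕ, (P ^ (k+1))⁻¹ * c k = -(M * (P - 1)⁻¹)) : ∀ k, c k = -M := by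
  have h0 : (0:ℝ) < P := lt_trans one_pos hP
  intro k
  by_contra hk
  have hlt : -M < c k :=
    lt_of_le_of_ne (neg_le_of_abs_le (hc k)) (fun h' => hk h'.symm)
  have hterm : (P ^ (k+1))⁻¹ * (-M) < (P ^ (k+1))⁻¹ * c k :=
    mul_lt_mul_of_pos_left hlt (by positivity)
  have hM : ∀ j : ℕ, |(-M : ℝ)| ≤ M := fun j => by
    rw [abs_neg, abs_of_nonneg (le_trans (abs_nonneg _) (hc 0))]
  have hstrict := Summable.tsum_lt_tsum (f := fun j : ℕ => (P ^ (j+1))⁻¹ * (-M))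
      (g := fun j : ℕ => (P ^ (j+1))⁻¹ * c j) (i := k)
      (fun j => mul_le_mul_of_nonneg_left (neg_le_of_abs_le (hc j)) (by positivity))
      hterm (summable_ser hP _ hM) (summable_ser hP c hc)
  rw [ser_const hP, h] at hstrict
  simp at hstrict



def digD (p : ℤ) (u : ℝ) : ℤ := ⌊(p:ℝ) * u + 1/2⌋

def digU (p : ℤ) : ℕ → ℝ → ℝ
  | 0, u => u
  | (k+1), u => (p:ℝ) * digU p k u - (digD p (digU p k u) : ℝ)

def dig (p : ℤ) (k : ℕ) (u : ℝ) : ℤ := digD p (digU p k u)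

variable {m : ℕ} {p : ℤ}

lemma digU_mem (hm : 1 ≤ m) (hp : p = 2 * (m:ℤ) + 1) {u : ℝ}
    (hu : u ∈ Set.Ico (-(1/2) : ℝ) (1/2)) (k : ℕ) :
    digU p k u ∈ Set.Ico (-(1/2) : ℝ) (1/2) := by
  induction k with
  | zero => exact hu
  | succ k ih =>
    obtain ⟨h1, h2⟩ := ih
    have hf1 : (digD p (digU p k u) : ℝ) ≤ (p:ℝ) * digU p k u + 1/2 := Int.floor_le _
    have hf2 : (p:ℝ) * digU p k u + 1/2 < (digD p (digU p k u) : ℝ) + 1 :=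
      Int.lt_floor_add_one _
    constructor
    · simp only [digU]; linarith
    · simp only [digU]; linarith

lemma dig_bound (hm : 1 ≤ m) (hp : p = 2 * (m:ℤ) + 1) {u : ℝ}
    (hu : u ∈ Set.Ico (-(1/2) : ℝ) (1/2)) (k : ℕ) : |dig p k u| ≤ (m:ℤ) := by
  have hP : ((p:ℝ)) = 2 * (m:ℝ) + 1 := by rw [hp]; push_cast; ring
  have hm1 : (1:ℝ) ≤ (m:ℝ) := by exact_mod_cast hm
  obtain ⟨h1, h2⟩ := digU_mem hm hp hu k
  rw [abs_le]
  constructor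
  · rw [dig, digD, Int.le_floor]
    push_cast
    nlinarith
  · rw [dig, digD]
    have : (p:ℝ) * digU p k u + 1/2 < (m:ℝ) + 1 := by nlinarith
    have := Int.floor_lt.2 (by push_cast; linarith : (p:ℝ) * digU p k u + 1/2 < ((m + 1 : ℤ) : ℝ))
    omega

lemma dig_partial (hp : p = 2 * (m:ℤ) + 1) (hm : 1 ≤ m) (u : ℝ) (N : ℕ) :
    ∑ k ∈ Finset.range N, ((p:ℝ) ^ (k+1))⁻¹ * (dig p k u : ℝ)
      = u - ((p:ℝ) ^ N)⁻¹ * digU p N u := by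
  have hp0 : (0:ℝ) < (p:ℝ) := by
    rw [hp]; push_cast; positivity
  induction N with
  | zero => simp [digU]
  | succ N ih =>
    rw [Finset.sum_range_succ, ih]
    show _ = u - ((p:ℝ) ^ (N+1))⁻¹ * ((p:ℝ) * digU p N u - (dig p N u : ℝ))
    have h1 : (p:ℝ) ^ (N+1) = (p:ℝ)^N * (p:ℝ) := by ring
    field_simp
    ring

lemma tsum_dig (hm : 1 ≤ m) (hp : p = 2 * (m:ℤ) + 1) {u : ℝ}
    (hu : u ∈ Set.Ico (-(1/2) : ℝ) (1/2)) :
    ∑' k : ℕ, ((p:ℝ) ^ (k+1))⁻¹ * (dig p k u : ℝ) = u := by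
  have hP1 : (1:ℝ) < (p:ℝ) := by
    rw [hp]; push_cast
    have : (1:ℝ) ≤ (m:ℝ) := by exact_mod_cast hm
    linarith
  have hbd : ∀ k, |(dig p k u : ℝ)| ≤ (m:ℝ) := fun k => by
    have := dig_bound hm hp hu k
    exact_mod_cast (by exact_mod_cast this : |(dig p k u : ℤ)| ≤ (m:ℤ))
  have hs := summable_ser hP1 (fun k => (dig p k u : ℝ)) hbd
  have htend := hs.hasSum.tendsto_sum_nat
  have htend2 : Filter.Tendsto
      (fun N => ∑ k ∈ Finset.range N, ((p:ℝ) ^ (k+1))⁻¹ * (dig p k u : ℝ))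
      Filter.atTop (nhds u) := by
    have heq : (fun N => ∑ k ∈ Finset.range N, ((p:ℝ) ^ (k+1))⁻¹ * (dig p k u : ℝ))
        = fun N => u - ((p:ℝ) ^ N)⁻¹ * digU p N u := by
      funext N; exact dig_partial hp hm u N
    rw [heq]
    have h0 : Filter.Tendsto (fun N : ℕ => ((p:ℝ) ^ N)⁻¹ * digU p N u)
        Filter.atTop (nhds 0) := by
      apply squeeze_zero_norm (a := fun N : ℕ => ((p:ℝ)⁻¹) ^ N * (1/2))
      · intro N
        rw [Real.norm_eq_abs, abs_mul, abs_inv, abs_pow, abs_of_pos (lt_trans one_pos hP1),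
          ← inv_pow]
        apply mul_le_mul_of_nonneg_left _ (by positivity)
        obtain ⟨l1, l2⟩ := digU_mem hm hp hu N
        rw [abs_le]; constructor <;> linarith
      · have := tendsto_pow_atTop_nhds_zero_of_lt_one
          (by positivity : (0:ℝ) ≤ (p:ℝ)⁻¹) (inv_lt_one_of_one_lt₀ hP1)
        simpa using this.mul_const (1/2 : ℝ)
    have := Filter.Tendsto.const_sub u h0
    simpa using this
  exact tendsto_nhds_unique htend htend2



/-- integer digit series -/
def Sser (p : ℤ) (c : ℕ → ℤ) : ℝ := ∑' k : ℕ, ((p:ℝ) ^ (k+1))⁻¹ * (c k : ℝ)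

/-- the ε-shift series -/
def Cser (p : ℤ) (ε : ℝ) (j : ℕ → ℤ) : ℝ := ∑' k : ℕ, ((p:ℝ) ^ (k+1))⁻¹ * bshift ε (j k)

lemma bshift_abs_le (ε : ℝ) (j : ℤ) : |bshift ε j| ≤ |ε| := by
  rw [bshift]; split
  · exact le_refl _
  · simp

lemma cast_bound {m : ℕ} {c : ℕ → ℤ} (hc : ∀ k, |c k| ≤ (m:ℤ)) :
    ∀ k, |(c k : ℝ)| ≤ (m:ℝ) := fun k => by exact_mod_cast hc k

lemma bshift_zero (ε : ℝ) : bshift ε 0 = 0 := by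
  rw [bshift, if_neg (by decide)]

variable {p : ℤ} {m : ℕ} {ε : ℝ}

lemma Tset_eq (hP : 1 < (p:ℝ)) : Tset p m ε =
    { z | ∃ i j : ℕ → ℤ, (∀ k, |i k| ≤ (m : ℤ)) ∧ (∀ k, |j k| ≤ (m : ℤ)) ∧
      z.1 = Sser p i + Cser p ε j ∧ z.2 = Sser p j } := by
  ext z
  simp only [Tset, Set.mem_setOf_eq]
  constructor <;> rintro ⟨i, j, hi, hj, h1, h2⟩ <;> refine ⟨i, j, hi, hj, ?_, h2⟩
  · rw [h1, Sser, Cser, ← Summable.tsum_add (summable_ser hP _ (cast_bound hi))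
      (summable_ser hP _ (fun k => bshift_abs_le ε (j k)))]
    apply tsum_congr; intro k; ring
  · rw [h1, Sser, Cser, ← Summable.tsum_add (summable_ser hP _ (cast_bound hi))
      (summable_ser hP _ (fun k => bshift_abs_le ε (j k)))]
    apply tsum_congr; intro k; ring

def seqCons (a : ℤ) (c : ℕ → ℤ) : ℕ → ℤ := fun k => match k with
  | 0 => a
  | (k+1) => c k

lemma Sser_cons (hP : 1 < (p:ℝ)) (a : ℤ) (c : ℕ → ℤ) (hc : ∀ k, |c k| ≤ (m:ℤ))
    (ha : |a| ≤ (m:ℤ)) :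
    Sser p (seqCons a c) = ((p:ℝ))⁻¹ * ((a:ℝ) + Sser p c) := by
  have hb : ∀ k, |((seqCons a c k : ℤ) : ℝ)| ≤ (m:ℝ) := by
    intro k; cases k with
    | zero => exact_mod_cast ha
    | succ k => exact cast_bound hc k
  have := ser_zero_add hP (fun k => ((seqCons a c k : ℤ) : ℝ)) hb
  rw [Sser, this]
  rfl

lemma Sser_tail_eq (hP : 1 < (p:ℝ)) (c : ℕ → ℤ) (hc : ∀ k, |c k| ≤ (m:ℤ)) :
    Sser p c = ((p:ℝ))⁻¹ * ((c 0 : ℝ) + Sser p (fun k => c (k+1))) :=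
  ser_zero_add hP (fun k => ((c k : ℤ) : ℝ)) (cast_bound hc)

lemma Gchar (hP : 1 < (p:ℝ)) (n : ℕ) :
    Gset p m ε (List.replicate n 0) =
    { z | ∃ I j : ℕ → ℤ, (∀ k, |I k| ≤ (m : ℤ)) ∧ (∀ k, |j k| ≤ (m : ℤ)) ∧
      z.1 = Sser p I + (((p:ℝ)) ^ n)⁻¹ * Cser p ε j ∧
      z.2 = (((p:ℝ)) ^ n)⁻¹ * Sser p j } := by
  have hp0 : (p:ℝ) ≠ 0 := by positivity
  induction n with
  | zero =>
    simp only [List.replicate_zero, Gset, pow_zero, inv_one, one_mul]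
    exact Tset_eq hP
  | succ n ih =>
    rw [List.replicate_succ]
    show (⋃ i ∈ Finset.Icc (-(m : ℤ)) (m : ℤ), fmap p ε i 0 '' Gset p m ε (List.replicate n 0)) = _
    rw [ih]
    ext z
    simp only [Set.mem_iUnion, Set.mem_image, Set.mem_setOf_eq, Finset.mem_Icc]
    constructor
    · rintro ⟨i, hi, w, ⟨I, j, hI, hj, hw1, hw2⟩, rfl⟩
      refine ⟨seqCons i I, j, ?_, hj, ?_, ?_⟩
      · intro k; cases k with
        | zero => rw [seqCons]; rw [abs_le]; exact hi
        | succ k => exact hI k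
      · show (w.1 + (i:ℝ) + bshift ε 0) / (p:ℝ) = _
        rw [bshift_zero, hw1, Sser_cons hP i I hI (abs_le.2 hi)]
        field_simp
        ring
      · show (w.2 + ((0:ℤ):ℝ)) / (p:ℝ) = _
        rw [hw2]
        push_cast
        rw [pow_succ, mul_inv]
        ring
    · rintro ⟨I, j, hI, hj, h1, h2⟩
      refine ⟨I 0, abs_le.1 (hI 0), (Sser p (fun k => I (k+1)) + ((p:ℝ)^n)⁻¹ * Cser p ε j,
        ((p:ℝ)^n)⁻¹ * Sser p j), ⟨fun k => I (k+1), j, fun k => hI (k+1), hj, rfl, rfl⟩, ?_⟩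
      have hz1 : z.1 = ((p:ℝ))⁻¹ * ((I 0 : ℝ) + Sser p (fun k => I (k+1)))
          + ((p:ℝ)^(n+1))⁻¹ * Cser p ε j := by
        rw [h1, Sser_tail_eq hP I hI]
      rw [fmap, bshift_zero]
      apply Prod.ext
      · show _ = z.1
        rw [hz1]
        push_cast
        field_simp
        ring
      · show _ = z.2
        rw [h2]
        push_cast
        rw [pow_succ, mul_inv]
        ring




variable {p : ℤ} {m : ℕ}

lemma basicP (hm : 1 ≤ m) (hp : p = 2 * (m:ℤ) + 1) :
    (1:ℝ) < (p:ℝ) ∧ ((p:ℝ) - 1 = 2 * (m:ℝ)) := by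
  have h1 : (1:ℝ) ≤ (m:ℝ) := by exact_mod_cast hm
  have : (p:ℝ) = 2 * (m:ℝ) + 1 := by rw [hp]; push_cast; ring
  constructor <;> [linarith; linarith]

lemma ser_rational_aux (hm : 1 ≤ m) (hp : p = 2 * (m:ℤ) + 1)
    (j j' : ℕ → ℤ) (hj : ∀ k, |j k| ≤ (m:ℤ)) (hj' : ∀ k, |j' k| ≤ (m:ℤ))
    (hS : Sser p j = Sser p j') (k₀ : ℕ)
    (hmin : ∀ k < k₀, j k = j' k) (hk : j k₀ = j' k₀ + 1) :
    ∃ q : ℚ, Sser p j = (q:ℝ) := by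
  obtain ⟨hP, hP1⟩ := basicP hm hp
  have hm1 : (1:ℝ) ≤ (m:ℝ) := by exact_mod_cast hm
  have hpne : (p:ℝ) ≠ 0 := by positivity
  set cR : ℕ → ℝ := fun k => ((j k : ℝ) - (j' k : ℝ)) with hcR
  have hcb : ∀ k, |cR k| ≤ 2 * (m:ℝ) := by
    intro k
    have h1 : |(j k : ℝ)| ≤ (m:ℝ) := by exact_mod_cast hj k
    have h2 : |(j' k : ℝ)| ≤ (m:ℝ) := by exact_mod_cast hj' k
    calc |cR k| ≤ |(j k : ℝ)| + |(j' k : ℝ)| := abs_sub _ _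
      _ ≤ 2 * (m:ℝ) := by linarith
  have hjb : ∀ k, |(j k : ℝ)| ≤ (m:ℝ) := fun k => by exact_mod_cast hj k
  have hjb' : ∀ k, |(j' k : ℝ)| ≤ (m:ℝ) := fun k => by exact_mod_cast hj' k
  -- difference series is zero
  have hzero : ∑' k : ℕ, ((p:ℝ) ^ (k+1))⁻¹ * cR k = 0 := by
    have : (fun k : ℕ => ((p:ℝ) ^ (k+1))⁻¹ * cR k)
        = fun k : ℕ => ((p:ℝ) ^ (k+1))⁻¹ * (j k : ℝ) - ((p:ℝ) ^ (k+1))⁻¹ * (j' k : ℝ) := by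
      funext k; rw [hcR]; ring
    rw [this, Summable.tsum_sub (summable_ser hP _ hjb) (summable_ser hP _ hjb')]
    rw [show (∑' k : ℕ, ((p:ℝ)^(k+1))⁻¹ * (j k : ℝ)) = Sser p j from rfl,
      show (∑' k : ℕ, ((p:ℝ)^(k+1))⁻¹ * (j' k : ℝ)) = Sser p j' from rfl, hS, sub_self]
  -- split the difference series at k₀+1
  have hsplit := ser_tail hP cR hcb (k₀+1)
  have hfin : (∑ k ∈ Finset.range (k₀+1), ((p:ℝ) ^ (k+1))⁻¹ * cR k)
      = ((p:ℝ) ^ (k₀+1))⁻¹ := by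
    rw [Finset.sum_range_succ, Finset.sum_eq_zero, zero_add]
    · have : cR k₀ = 1 := by rw [hcR]; push_cast [hk]; ring
      rw [this, mul_one]
    · intro k hkk
      rw [hcR]
      simp [hmin k (Finset.mem_range.1 hkk)]
  set T := ∑' k : ℕ, ((p:ℝ) ^ (k+1))⁻¹ * cR (k + (k₀+1)) with hT
  have hTeq : T = -1 := by
    rw [hzero, hfin] at hsplit
    have hps : ((p:ℝ) ^ (k₀+1))⁻¹ ≠ 0 := by positivity
    field_simp at hsplit
    linarith [hsplit]
  -- extremal: all tail digits of the difference are -2m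
  have hext := ser_extremal hP (fun k => cR (k + (k₀+1))) (fun k => hcb _)
    (by rw [← hT, hTeq, hP1]; field_simp)
  -- hence j is eventually -m
  have hjtail : ∀ k, k₀ + 1 ≤ k → j k = -(m:ℤ) := by
    intro k hkk
    have h3 : cR (k - (k₀+1) + (k₀+1)) = -(2 * (m:ℝ)) := hext (k - (k₀+1))
    have heq : k - (k₀+1) + (k₀+1) = k := Nat.sub_add_cancel hkk
    rw [heq] at h3
    simp only [hcR] at h3
    have h1 := hj k; have h2 := hj' k
    rw [abs_le] at h1 h2
    have hint : j k - j' k = -(2 * (m:ℤ)) := by exact_mod_cast h3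
    omega
  -- rational value
  refine ⟨(∑ k ∈ Finset.range (k₀+1), ((p:ℚ) ^ (k+1))⁻¹ * (j k : ℚ))
    - ((p:ℚ) ^ (k₀+1))⁻¹ / 2, ?_⟩
  have hsplit2 := ser_tail hP (fun k => (j k : ℝ)) hjb (k₀+1)
  have htail2 : ∑' k : ℕ, ((p:ℝ) ^ (k+1))⁻¹ * (j (k + (k₀+1)) : ℝ) = -(1/2 : ℝ) := by
    have : (fun k : ℕ => ((p:ℝ) ^ (k+1))⁻¹ * (j (k + (k₀+1)) : ℝ))
        = fun k : ℕ => ((p:ℝ) ^ (k+1))⁻¹ * (-(m:ℝ)) := by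
      funext k
      rw [hjtail (k + (k₀+1)) (by omega)]
      push_cast; ring
    rw [this, ser_const hP, hP1]
    have hmne : (m:ℝ) ≠ 0 := by linarith
    field_simp
  rw [Sser, hsplit2, htail2]
  have hq : (p:ℚ) ≠ 0 := by
    have : (0:ℝ) < (p:ℝ) := by linarith
    exact_mod_cast ne_of_gt (by exact_mod_cast this : (0:ℚ) < (p:ℚ))
  push_cast
  ring

lemma ser_rational (hm : 1 ≤ m) (hp : p = 2 * (m:ℤ) + 1)
    (j j' : ℕ → ℤ) (hj : ∀ k, |j k| ≤ (m:ℤ)) (hj' : ∀ k, |j' k| ≤ (m:ℤ))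
    (hS : Sser p j = Sser p j') (hne : j ≠ j') :
    ∃ q : ℚ, Sser p j = (q:ℝ) := by
  obtain ⟨hP, hP1⟩ := basicP hm hp
  have hex : ∃ k, j k ≠ j' k := by
    by_contra h
    push_neg at h
    exact hne (funext h)
  classical
  let k₀ := Nat.find hex
  have hk₀ : j k₀ ≠ j' k₀ := Nat.find_spec hex
  have hmin : ∀ k < k₀, j k = j' k := fun k hk => by
    by_contra h
    exact absurd (Nat.find_le h : k₀ ≤ k) (by omega)
  -- |j k₀ - j' k₀| ≤ 1
  have hd1 : j k₀ - j' k₀ = 1 ∨ j k₀ - j' k₀ = -1 := by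
    -- from the series identity
    set cR : ℕ → ℝ := fun k => ((j k : ℝ) - (j' k : ℝ)) with hcR
    have hcb : ∀ k, |cR k| ≤ 2 * (m:ℝ) := by
      intro k
      have h1 : |(j k : ℝ)| ≤ (m:ℝ) := by exact_mod_cast hj k
      have h2 : |(j' k : ℝ)| ≤ (m:ℝ) := by exact_mod_cast hj' k
      calc |cR k| ≤ |(j k : ℝ)| + |(j' k : ℝ)| := abs_sub _ _
        _ ≤ 2 * (m:ℝ) := by linarith
    have hjb : ∀ k, |(j k : ℝ)| ≤ (m:ℝ) := fun k => by exact_mod_cast hj k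
    have hjb' : ∀ k, |(j' k : ℝ)| ≤ (m:ℝ) := fun k => by exact_mod_cast hj' k
    have hzero : ∑' k : ℕ, ((p:ℝ) ^ (k+1))⁻¹ * cR k = 0 := by
      have : (fun k : ℕ => ((p:ℝ) ^ (k+1))⁻¹ * cR k)
          = fun k : ℕ => ((p:ℝ) ^ (k+1))⁻¹ * (j k : ℝ) - ((p:ℝ) ^ (k+1))⁻¹ * (j' k : ℝ) := by
        funext k; rw [hcR]; ring
      rw [this, Summable.tsum_sub (summable_ser hP _ hjb) (summable_ser hP _ hjb')]
      rw [show (∑' k : ℕ, ((p:ℝ)^(k+1))⁻¹ * (j k : ℝ)) = Sser p j from rfl,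
        show (∑' k : ℕ, ((p:ℝ)^(k+1))⁻¹ * (j' k : ℝ)) = Sser p j' from rfl, hS, sub_self]
    have hsplit := ser_tail hP cR hcb (k₀+1)
    have hfin : (∑ k ∈ Finset.range (k₀+1), ((p:ℝ) ^ (k+1))⁻¹ * cR k)
        = ((p:ℝ) ^ (k₀+1))⁻¹ * cR k₀ := by
      rw [Finset.sum_range_succ, Finset.sum_eq_zero, zero_add]
      intro k hkk
      rw [hcR]
      simp [hmin k (Finset.mem_range.1 hkk)]
    have habsT := abs_ser_le hP (fun k => cR (k + (k₀+1))) (fun k => hcb _)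
    rw [hP1] at habsT
    have hmne : (m:ℝ) ≠ 0 := by
      have : (1:ℝ) ≤ (m:ℝ) := by exact_mod_cast hm
      linarith
    have habsT' : |∑' k : ℕ, ((p:ℝ) ^ (k+1))⁻¹ * cR (k + (k₀+1))| ≤ 1 := by
      calc |∑' k : ℕ, ((p:ℝ) ^ (k+1))⁻¹ * cR (k + (k₀+1))| ≤ 2 * (m:ℝ) * (2*(m:ℝ))⁻¹ :=
            habsT
        _ = 1 := by field_simp
    rw [hzero, hfin] at hsplit
    set T := ∑' k : ℕ, ((p:ℝ) ^ (k+1))⁻¹ * cR (k + (k₀+1)) with hTdef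
    have hps : (0:ℝ) < ((p:ℝ) ^ (k₀+1))⁻¹ := by positivity
    have heq : cR k₀ = -T := by
      have h2 : ((p:ℝ)^(k₀+1))⁻¹ * (cR k₀ + T) = 0 := by
        rw [mul_add]; linarith [hsplit]
      have h3 := (mul_eq_zero.1 h2).resolve_left (ne_of_gt hps)
      linarith
    have habs1 : |cR k₀| ≤ 1 := by rw [heq, abs_neg]; exact habsT'
    have habs2 : |(j k₀ : ℝ) - (j' k₀ : ℝ)| ≤ 1 := habs1
    have hint : |j k₀ - j' k₀| ≤ 1 := by exact_mod_cast habs2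
    rw [abs_le] at hint
    omega
  rcases hd1 with h | h
  · exact ser_rational_aux hm hp j j' hj hj' hS k₀ hmin (by omega)
  · obtain ⟨q, hq⟩ := ser_rational_aux hm hp j' j hj' hj hS.symm k₀
      (fun k hk => (hmin k hk).symm) (by omega)
    exact ⟨q, hS.trans hq⟩


open MeasureTheory

lemma null_horiz (c : ℝ) : volume {z : ℝ × ℝ | z.2 = c} = 0 := by
  have h : {z : ℝ × ℝ | z.2 = c} = Set.univ ×ˢ {c} := by
    ext z
    constructor
    · intro hz; exact ⟨trivial, hz⟩
    · intro hz; exact hz.2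
  rw [h, Measure.volume_eq_prod _ _, Measure.prod_prod]
  simp

lemma null_rat_strip : volume {z : ℝ × ℝ | ∃ q : ℚ, z.2 = (q:ℝ)} = 0 := by
  have h : {z : ℝ × ℝ | ∃ q : ℚ, z.2 = (q:ℝ)} = Set.univ ×ˢ (Set.range ((↑) : ℚ → ℝ)) := by
    ext z
    constructor
    · intro ⟨q, hq⟩; exact ⟨trivial, q, hq.symm⟩
    · intro ⟨_, q, hq⟩; exact ⟨q, hq.symm⟩
  rw [h, Measure.volume_eq_prod _ _, Measure.prod_prod]
  rw [(Set.countable_range _).measure_zero]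
  simp

lemma null_graph {g : ℝ → ℝ} (hg : Measurable g) :
    volume {z : ℝ × ℝ | z.1 = g z.2} = 0 := by
  have hT : MeasurableSet {z : ℝ × ℝ | z.2 = g z.1} := by
    have : {z : ℝ × ℝ | z.2 = g z.1} = {z : ℝ × ℝ | z.2 - g z.1 = 0} := by
      ext z; simp [sub_eq_zero]
    rw [this]
    exact (measurable_snd.sub (hg.comp measurable_fst)) (measurableSet_singleton 0)
  have hTvol : volume {z : ℝ × ℝ | z.2 = g z.1} = 0 := by
    rw [Measure.volume_eq_prod _ _, Measure.prod_apply hT]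
    have : ∀ x : ℝ, volume (Prod.mk x ⁻¹' {z : ℝ × ℝ | z.2 = g z.1}) = 0 := by
      intro x
      have : (Prod.mk x ⁻¹' {z : ℝ × ℝ | z.2 = g z.1}) = {g x} := by
        ext y; simp
      rw [this]
      exact measure_singleton _
    simp [this]
  have hswap : {z : ℝ × ℝ | z.1 = g z.2} = Prod.swap ⁻¹' {z : ℝ × ℝ | z.2 = g z.1} := by
    ext z; simp [Prod.swap]
  rw [hswap, Measure.volume_eq_prod _ _]
  rw [MeasurePreserving.measure_preimage Measure.measurePreserving_swap hT.nullMeasurableSet]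
  exact hTvol

open MeasureTheory


lemma measurable_digU (p : ℤ) (k : ℕ) : Measurable (digU p k) := by
  induction k with
  | zero => exact measurable_id
  | succ k ih =>
    show Measurable fun u => (p:ℝ) * digU p k u - ((digD p (digU p k u) : ℤ) : ℝ)
    apply Measurable.sub
    · exact ih.const_mul _
    · apply Measurable.comp (measurable_from_top (f := fun z : ℤ => (z:ℝ)))
      apply Measurable.comp Int.measurable_floor
      exact (ih.const_mul _).add_const _

lemma measurable_dig (p : ℤ) (k : ℕ) : Measurable fun u => dig p k u := by
  apply Measurable.comp Int.measurable_floor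
  exact ((measurable_digU p k).const_mul _).add_const _

def Cfun (p : ℤ) (ε : ℝ) (n : ℕ) (s : ℤ) (y : ℝ) : ℝ :=
  ∑' k : ℕ, ((p:ℝ) ^ (k+1))⁻¹ * bshift ε (dig p k ((p:ℝ)^n * y - (s:ℝ)))

lemma measurable_Cfun {p : ℤ} (hP : 1 < (p:ℝ)) (ε : ℝ) (n : ℕ) (s : ℤ) :
    Measurable (Cfun p ε n s) := by
  have hmeas : ∀ N : ℕ, Measurable (fun y =>
      ∑ k ∈ Finset.range N, ((p:ℝ) ^ (k+1))⁻¹ * bshift ε (dig p k ((p:ℝ)^n * y - (s:ℝ)))) := by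
    intro N
    apply Finset.measurable_sum
    intro k _
    apply Measurable.const_mul
    apply Measurable.comp (measurable_from_top (f := bshift ε))
    exact (measurable_dig p k).comp (((measurable_id.const_mul _).sub_const _))
  apply measurable_of_tendsto_metrizable hmeas
  rw [tendsto_pi_nhds]
  intro y
  exact ((summable_ser hP _ (fun k => bshift_abs_le ε _)).hasSum.tendsto_sum_nat)

end Stmt9Aux


namespace Stmt9Aux

lemma floor_frac (x : ℝ) : x - ((⌊x + 1/2⌋ : ℤ) : ℝ) ∈ Set.Ico (-(1/2) : ℝ) (1/2) := by
  constructor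
  · have := Int.floor_le (x + 1/2); linarith
  · have := Int.lt_floor_add_one (x + 1/2); linarith

lemma abs_Sser_le {p : ℤ} {m : ℕ} (hm : 1 ≤ m) (hp : p = 2 * (m:ℤ) + 1)
    (c : ℕ → ℤ) (hc : ∀ k, |c k| ≤ (m:ℤ)) : |Sser p c| ≤ 1/2 := by
  obtain ⟨hP, hP1⟩ := basicP hm hp
  have h1 := abs_ser_le hP _ (cast_bound hc)
  rw [hP1] at h1
  have hm1 : (1:ℝ) ≤ (m:ℝ) := by exact_mod_cast hm
  have h2 : (m:ℝ) * (2*(m:ℝ))⁻¹ = 1/2 := by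
    field_simp
  rw [h2] at h1
  exact h1

lemma Sser_dig {p : ℤ} {m : ℕ} (hm : 1 ≤ m) (hp : p = 2 * (m:ℤ) + 1) {u : ℝ}
    (hu : u ∈ Set.Ico (-(1/2) : ℝ) (1/2)) : Sser p (fun k => dig p k u) = u :=
  tsum_dig hm hp hu

end Stmt9Aux

/-- for any sequence `(ℓ_s)_{s∈ℤ}`, the translates of `G₀ = G_{0ⁿ}` by
`J' = {(r + ℓ_s, s/pⁿ) : r, s ∈ ℤ}` cover `ℝ²` and are pairwise measure-disjoint;
in particular `G₀` is a self-similar tile. -/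
theorem stmt9 (m : ℕ) (hm : 1 ≤ m) (p : ℤ) (hp : p = 2 * (m : ℤ) + 1) (ε : ℝ)
    (n : ℕ) (hn : 1 ≤ n) (ℓ : ℤ → ℝ) :
    (⋃ t ∈ {t : ℝ × ℝ | ∃ r s : ℤ, t = ((r : ℝ) + ℓ s, (s : ℝ) / (p : ℝ) ^ n)},
        (· + t) '' Gset p m ε (List.replicate n 0)) = Set.univ ∧
    ∀ t ∈ {t : ℝ × ℝ | ∃ r s : ℤ, t = ((r : ℝ) + ℓ s, (s : ℝ) / (p : ℝ) ^ n)},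
      ∀ t' ∈ {t : ℝ × ℝ | ∃ r s : ℤ, t = ((r : ℝ) + ℓ s, (s : ℝ) / (p : ℝ) ^ n)}, t ≠ t' →
        MeasureTheory.volume
          (((· + t) '' Gset p m ε (List.replicate n 0)) ∩
            ((· + t') '' Gset p m ε (List.replicate n 0))) = 0 := by
  classical
  obtain ⟨hP, hP1⟩ := Stmt9Aux.basicP hm hp
  have hp0 : (p:ℝ) ≠ 0 := by positivity
  have hpn : ((p:ℝ)^n) ≠ 0 := by positivity
  have hchar := Stmt9Aux.Gchar (m := m) (ε := ε) hP n
  -- membership criterion for translates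
  have hmem : ∀ (z : ℝ × ℝ) (r s : ℤ),
      z ∈ (· + (((r:ℝ) + ℓ s, (s:ℝ)/(p:ℝ)^n) : ℝ × ℝ)) '' Gset p m ε (List.replicate n 0) ↔
      ∃ I j : ℕ → ℤ, (∀ k, |I k| ≤ (m:ℤ)) ∧ (∀ k, |j k| ≤ (m:ℤ)) ∧
        z.1 - ((r:ℝ) + ℓ s) = Stmt9Aux.Sser p I + ((p:ℝ)^n)⁻¹ * Stmt9Aux.Cser p ε j ∧
        (p:ℝ)^n * z.2 - (s:ℝ) = Stmt9Aux.Sser p j := by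
    intro z r s
    constructor
    · rintro ⟨w, hw, rfl⟩
      rw [hchar] at hw
      obtain ⟨I, j, h1, h2, h3, h4⟩ := hw
      refine ⟨I, j, h1, h2, ?_, ?_⟩
      · show w.1 + ((r:ℝ) + ℓ s) - ((r:ℝ) + ℓ s) = _
        rw [h3]; ring
      · show (p:ℝ)^n * (w.2 + (s:ℝ)/(p:ℝ)^n) - (s:ℝ) = _
        rw [h4]; field_simp; ring
    · rintro ⟨I, j, h1, h2, h3, h4⟩
      refine ⟨z - ((r:ℝ) + ℓ s, (s:ℝ)/(p:ℝ)^n), ?_, by simp⟩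
      rw [hchar]
      refine ⟨I, j, h1, h2, h3, ?_⟩
      show z.2 - (s:ℝ)/(p:ℝ)^n = ((p:ℝ)^n)⁻¹ * Stmt9Aux.Sser p j
      rw [← h4]
      field_simp
  constructor
  · -- covering
    rw [Set.eq_univ_iff_forall]
    intro z
    rw [Set.mem_iUnion₂]
    set s : ℤ := ⌊(p:ℝ)^n * z.2 + 1/2⌋ with hsdef
    have hu : (p:ℝ)^n * z.2 - (s:ℝ) ∈ Set.Ico (-(1/2) : ℝ) (1/2) :=
      Stmt9Aux.floor_frac ((p:ℝ)^n * z.2)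
    set j : ℕ → ℤ := fun k => Stmt9Aux.dig p k ((p:ℝ)^n * z.2 - (s:ℝ)) with hjdef
    have hjb : ∀ k, |j k| ≤ (m:ℤ) := fun k => Stmt9Aux.dig_bound hm hp hu k
    have hSj : Stmt9Aux.Sser p j = (p:ℝ)^n * z.2 - (s:ℝ) := Stmt9Aux.Sser_dig hm hp hu
    set w0 : ℝ := z.1 - ℓ s - ((p:ℝ)^n)⁻¹ * Stmt9Aux.Cser p ε j with hw0def
    set r : ℤ := ⌊w0 + 1/2⌋ with hrdef
    have hu' : w0 - (r:ℝ) ∈ Set.Ico (-(1/2) : ℝ) (1/2) := Stmt9Aux.floor_frac w0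
    set I : ℕ → ℤ := fun k => Stmt9Aux.dig p k (w0 - (r:ℝ)) with hIdef
    have hIb : ∀ k, |I k| ≤ (m:ℤ) := fun k => Stmt9Aux.dig_bound hm hp hu' k
    have hSI : Stmt9Aux.Sser p I = w0 - (r:ℝ) := Stmt9Aux.Sser_dig hm hp hu'
    refine ⟨((r:ℝ) + ℓ s, (s:ℝ)/(p:ℝ)^n), ⟨r, s, rfl⟩, ?_⟩
    rw [hmem]
    refine ⟨I, j, hIb, hjb, ?_, hSj.symm⟩
    rw [hSI, hw0def]
    ring
  · -- pairwise null intersections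
    rintro t ⟨r, s, rfl⟩ t' ⟨r', s', rfl⟩ hne
    by_cases hss : s = s'
    · -- same row
      subst hss
      have hrr : r ≠ r' := by
        intro h; apply hne; rw [h]
      set g₁ : ℝ → ℝ := fun y => ((r:ℝ) + ℓ s + 1/2) + ((p:ℝ)^n)⁻¹ * Stmt9Aux.Cfun p ε n s y
        with hg₁def
      set g₂ : ℝ → ℝ := fun y => ((r:ℝ) + ℓ s - 1/2) + ((p:ℝ)^n)⁻¹ * Stmt9Aux.Cfun p ε n s y
        with hg₂def
      have hmg : Measurable (Stmt9Aux.Cfun p ε n s) := Stmt9Aux.measurable_Cfun hP ε n s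
      have hmg₁ : Measurable g₁ := ((hmg.const_mul _).const_add _)
      have hmg₂ : Measurable g₂ := ((hmg.const_mul _).const_add _)
      apply MeasureTheory.measure_mono_null
        (t := {z : ℝ × ℝ | ∃ q : ℚ, z.2 = (q:ℝ)} ∪
          ({z : ℝ × ℝ | z.1 = g₁ z.2} ∪ {z : ℝ × ℝ | z.1 = g₂ z.2}))
      · rintro z ⟨hz1, hz2⟩
        rw [hmem] at hz1 hz2
        obtain ⟨I, j, hIb, hjb, hx, hy⟩ := hz1
        obtain ⟨I', j', hIb', hjb', hx', hy'⟩ := hz2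
        by_cases hq : ∃ q : ℚ, z.2 = (q:ℝ)
        · exact Or.inl hq
        right
        have hSS : Stmt9Aux.Sser p j = Stmt9Aux.Sser p j' := by rw [← hy, ← hy']
        have hratS : ∀ q0 : ℚ, Stmt9Aux.Sser p j ≠ (q0:ℝ) := by
          intro q0 hq0
          apply hq
          refine ⟨(q0 + s)/(p:ℚ)^n, ?_⟩
          have hz2' : z.2 = ((q0:ℝ) + (s:ℝ))/(p:ℝ)^n := by
            rw [← hq0, ← hy]
            field_simp
            ring
          rw [hz2']; push_cast; ring
        have hnej : j = j' := by
          by_contra hne2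
          obtain ⟨q, hq'⟩ := Stmt9Aux.ser_rational hm hp j j' hjb hjb' hSS hne2
          exact hratS q hq'
        have habsj := Stmt9Aux.abs_Sser_le hm hp j hjb
        rw [abs_le] at habsj
        have hult : Stmt9Aux.Sser p j < 1/2 := by
          rcases lt_or_eq_of_le habsj.2 with h | h
          · exact h
          · exfalso
            apply hratS (1/2 : ℚ)
            rw [h]; push_cast; ring
        have huIco : (p:ℝ)^n * z.2 - (s:ℝ) ∈ Set.Ico (-(1/2) : ℝ) (1/2) := by
          constructor
          · rw [hy]; exact habsj.1
          · rw [hy]; exact hult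
        have hdigeq : j = fun k => Stmt9Aux.dig p k ((p:ℝ)^n * z.2 - (s:ℝ)) := by
          by_contra hne2
          have hSd : Stmt9Aux.Sser p (fun k => Stmt9Aux.dig p k ((p:ℝ)^n * z.2 - (s:ℝ)))
              = (p:ℝ)^n * z.2 - (s:ℝ) := Stmt9Aux.Sser_dig hm hp huIco
          have hSS2 : Stmt9Aux.Sser p j
              = Stmt9Aux.Sser p (fun k => Stmt9Aux.dig p k ((p:ℝ)^n * z.2 - (s:ℝ))) := by
            rw [hSd, ← hy]
          obtain ⟨q, hq'⟩ := Stmt9Aux.ser_rational hm hp j _ hjb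
            (fun k => Stmt9Aux.dig_bound hm hp huIco k) hSS2 hne2
          exact hratS q hq'
        have hCeq : Stmt9Aux.Cser p ε j = Stmt9Aux.Cfun p ε n s z.2 := by
          rw [Stmt9Aux.Cfun, Stmt9Aux.Cser, hdigeq]
        rw [← hnej] at hx'
        have habsI := Stmt9Aux.abs_Sser_le hm hp I hIb
        have habsI' := Stmt9Aux.abs_Sser_le hm hp I' hIb'
        rw [abs_le] at habsI habsI'
        have hd : (r':ℝ) - (r:ℝ) = Stmt9Aux.Sser p I - Stmt9Aux.Sser p I' := by
          linarith [hx, hx']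
        have hrr1 : |r - r'| ≤ 1 := by
          have h6 : |(r:ℝ) - (r':ℝ)| ≤ 1 := by
            rw [abs_le]; constructor <;> linarith
          have h7 : |((r - r' : ℤ) : ℝ)| ≤ 1 := by push_cast; exact h6
          exact_mod_cast h7
        rw [abs_le] at hrr1
        have hcase : r' - r = 1 ∨ r' - r = -1 := by omega
        rcases hcase with h8 | h8
        · left
          have hc1 : (r':ℝ) - (r:ℝ) = 1 := by
            have : ((r' - r : ℤ) : ℝ) = 1 := by rw [h8]; norm_num
            push_cast at this; linarith
          have hSIv : Stmt9Aux.Sser p I = 1/2 := by linarith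
          show z.1 = g₁ z.2
          rw [hg₁def]
          simp only
          rw [← hCeq]
          linarith [hx]
        · right
          have hc1 : (r':ℝ) - (r:ℝ) = -1 := by
            have : ((r' - r : ℤ) : ℝ) = -1 := by rw [h8]; norm_num
            push_cast at this; linarith
          have hSIv : Stmt9Aux.Sser p I = -(1/2) := by linarith
          show z.1 = g₂ z.2
          rw [hg₂def]
          simp only
          rw [← hCeq]
          linarith [hx]
      · apply MeasureTheory.measure_union_null Stmt9Aux.null_rat_strip
        exact MeasureTheory.measure_union_null (Stmt9Aux.null_graph hmg₁)
          (Stmt9Aux.null_graph hmg₂)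
    · -- different rows
      apply MeasureTheory.measure_mono_null (t := {z : ℝ × ℝ | z.2 = ((s:ℝ) + (s':ℝ))/(2*(p:ℝ)^n)})
      · rintro z ⟨hz1, hz2⟩
        rw [hmem] at hz1 hz2
        obtain ⟨I, j, hIb, hjb, hx, hy⟩ := hz1
        obtain ⟨I', j', hIb', hjb', hx', hy'⟩ := hz2
        have h1 := Stmt9Aux.abs_Sser_le hm hp j hjb
        have h2 := Stmt9Aux.abs_Sser_le hm hp j' hjb'
        rw [← hy, abs_le] at h1
        rw [← hy', abs_le] at h2
        have hss1 : |s - s'| ≤ 1 := by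
          have h6 : |(s:ℝ) - (s':ℝ)| ≤ 1 := by
            rw [abs_le]; constructor <;> linarith
          have h7 : |((s - s' : ℤ) : ℝ)| ≤ 1 := by push_cast; exact h6
          exact_mod_cast h7
        rw [abs_le] at hss1
        have hcase : s' - s = 1 ∨ s' - s = -1 := by omega
        show z.2 = ((s:ℝ) + (s':ℝ))/(2*(p:ℝ)^n)
        rw [eq_div_iff (by positivity : 2*(p:ℝ)^n ≠ 0)]
        rcases hcase with h8 | h8
        · have hc1 : (s':ℝ) = (s:ℝ) + 1 := by
            have : ((s' - s : ℤ) : ℝ) = 1 := by rw [h8]; norm_num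
            push_cast at this; linarith
          have ha : (p:ℝ)^n * z.2 = (s:ℝ) + 1/2 := by
            linarith [h1.1, h1.2, h2.1, h2.2]
          rw [hc1]
          linear_combination 2 * ha
        · have hc1 : (s':ℝ) = (s:ℝ) - 1 := by
            have : ((s' - s : ℤ) : ℝ) = -1 := by rw [h8]; norm_num
            push_cast at this; linarith
          have ha : (p:ℝ)^n * z.2 = (s:ℝ) - 1/2 := by
            linarith [h1.1, h1.2, h2.1, h2.2]
          rw [hc1]
          linear_combination 2 * ha
      · exact Stmt9Aux.null_horiz _
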